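/- Let ℋ be a complex Hilbert space with Hilbert (orthonormal) basis (e_n)_{n∈ℕ} and let (E_n)_{n∈ℕ} be pairwise distinct real numbers such that for some N, E_n ≠ 0 for all n ≥ N and ∑_{n≥N} 1/E_n² < ∞. Let 𝓕 be the algebraic linear span of {e_n : n ∈ ℕ}. Then for every φ ∈ 𝓕 the family (c_n(φ))_{n∈ℕ}, where c_n(φ) := ∑_{m≠n} ⟨e_m,φ⟩/(E_n − E_m) (a finite sum), is square-summable, so that Tφ := i ∑_n c_n(φ) e_n converges in ℋ; moreover the resulting linear map T : 𝓕 → ℋ is symmetric: ⟨Tφ,ψ⟩ = ⟨φ,Tψ⟩ for all φ,ψ ∈ 𝓕. -/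

import Mathlib

open scoped InnerProductSpace

/-- The coefficient `c_n(φ) = ∑_{m ≠ n} ⟨e_m, φ⟩ / (E_n - E_m)` of the
Galapon/Arai–Matsuzawa time operator. -/
noncomputable def timeOpCoeff {ℋ : Type*} [NormedAddCommGroup ℋ] [InnerProductSpace ℂ ℋ]
    (e : HilbertBasis ℕ ℂ ℋ) (E : ℕ → ℝ) (φ : ℋ) (n : ℕ) : ℂ :=
  ∑' m : ℕ, if m = n then 0 else ⟪e m, φ⟫_ℂ / ((E n : ℂ) - (E m : ℂ))

/-- The Galapon/Arai–Matsuzawa time operator `Tφ = i ∑_n c_n(φ) e_n`. -/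
noncomputable def timeOp {ℋ : Type*} [NormedAddCommGroup ℋ] [InnerProductSpace ℂ ℋ]
    (e : HilbertBasis ℕ ℂ ℋ) (E : ℕ → ℝ) (φ : ℋ) : ℋ :=
  Complex.I • ∑' n : ℕ, timeOpCoeff e E φ n • e n

section AuxLemmas

variable {ℋ : Type*} [NormedAddCommGroup ℋ] [InnerProductSpace ℂ ℋ]

lemma tOp_inner_eq_finsupp (e : HilbertBasis ℕ ℂ ℋ) (a : ℕ →₀ ℂ) (m : ℕ) :
    ⟪e m, a.sum fun i r => r • (e i : ℋ)⟫_ℂ = a m := by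
  rw [Finsupp.sum, inner_sum]
  simp only [inner_smul_right, orthonormal_iff_ite.mp e.orthonormal]
  simp only [mul_ite, mul_one, mul_zero, Finset.sum_ite_eq]
  split
  · rfl
  · next h => exact (Finsupp.notMem_support_iff.mp h).symm

lemma tOp_coeff_eq (e : HilbertBasis ℕ ℂ ℋ) (E : ℕ → ℝ) (a : ℕ →₀ ℂ) (n : ℕ) :
    timeOpCoeff e E (a.sum fun i r => r • (e i : ℋ)) n
      = ∑ m ∈ a.support, if m = n then 0 else (a m) / ((E n : ℂ) - (E m : ℂ)) := by
  unfold timeOpCoeff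
  rw [tsum_eq_sum (s := a.support) ?_]
  · exact Finset.sum_congr rfl fun m _ => by rw [tOp_inner_eq_finsupp]
  · intro m hm
    rw [tOp_inner_eq_finsupp, Finsupp.notMem_support_iff.mp hm]
    simp

lemma tOp_aux_summable (E : ℕ → ℝ) (N : ℕ) (hne : ∀ n, N ≤ n → E n ≠ 0)
    (hsum : Summable fun n : ℕ => 1 / (E (n + N)) ^ 2) (a : ℝ) :
    Summable fun n : ℕ => ((E n - a) ^ 2)⁻¹ := by
  have h0 : Summable fun n : ℕ => (E n ^ 2)⁻¹ :=
    (summable_nat_add_iff N).mp (by simpa [one_div] using hsum)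
  apply Summable.of_norm_bounded_eventually_nat (h0.mul_left 4)
  have h1 : ∀ᶠ n : ℕ in Filter.atTop, (E n ^ 2)⁻¹ < ((2 * |a| + 1) ^ 2)⁻¹ := by
    have hpos : (0:ℝ) < ((2 * |a| + 1) ^ 2)⁻¹ := by positivity
    exact h0.tendsto_atTop_zero.eventually_lt_const hpos
  filter_upwards [h1, Filter.eventually_ge_atTop N] with n h1n h2n
  have hEn : E n ≠ 0 := hne n h2n
  have hp1 : (0:ℝ) < E n ^ 2 := by positivity
  have hsq : (2 * |a| + 1) ^ 2 < E n ^ 2 :=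
    (inv_lt_inv₀ hp1 (by positivity)).mp h1n
  have habs : 2 * |a| + 1 < |E n| := by
    nlinarith [sq_abs (E n), abs_nonneg (E n), abs_nonneg a]
  have hlow : |E n| / 2 ≤ |E n - a| := by
    have := abs_sub_abs_le_abs_sub (E n) a
    linarith
  have hq : E n ^ 2 / 4 ≤ (E n - a) ^ 2 := by
    calc E n ^ 2 / 4 = (|E n| / 2) ^ 2 := by rw [div_pow, sq_abs]; norm_num
      _ ≤ |E n - a| ^ 2 := pow_le_pow_left₀ (by positivity) hlow 2
      _ = (E n - a) ^ 2 := sq_abs _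
  have hq0 : (0:ℝ) < E n ^ 2 / 4 := by positivity
  rw [Real.norm_eq_abs, abs_of_nonneg (by positivity)]
  calc ((E n - a) ^ 2)⁻¹ ≤ (E n ^ 2 / 4)⁻¹ := inv_anti₀ hq0 hq
    _ = 4 * (E n ^ 2)⁻¹ := by field_simp

lemma tOp_memℓp_g (E : ℕ → ℝ) (N : ℕ) (hne : ∀ n, N ≤ n → E n ≠ 0)
    (hsum : Summable fun n : ℕ => 1 / (E (n + N)) ^ 2) (m : ℕ) (c : ℂ) :
    Memℓp (fun n => if m = n then (0:ℂ) else c / ((E n : ℂ) - (E m : ℂ))) 2 := by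
  apply memℓp_gen
  have h2 : ((2:ENNReal)).toReal = (2:ℝ) := by simp
  rw [h2]
  have key := (tOp_aux_summable E N hne hsum (E m)).mul_left (‖c‖^2)
  apply Summable.of_nonneg_of_le (fun n => by positivity) ?_ key
  intro n
  rw [Real.rpow_two]
  split
  · have h0 : ‖(0:ℂ)‖ ^ 2 = 0 := by norm_num
    rw [h0]
    positivity
  · have : ((E n : ℂ) - (E m : ℂ)) = (((E n - E m : ℝ)) : ℂ) := by push_cast; ring
    rw [this, norm_div, Complex.norm_real, div_pow, Real.norm_eq_abs, sq_abs, div_eq_mul_inv]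

lemma tOp_memℓp_sum {s : Finset ℕ} {f : ℕ → ℕ → ℂ} (h : ∀ m ∈ s, Memℓp (f m) 2) :
    Memℓp (fun n => ∑ m ∈ s, f m n) 2 := by
  classical
  induction s using Finset.induction_on with
  | empty => simpa [Pi.zero_def] using (zero_memℓp : Memℓp (0 : ℕ → ℂ) 2)
  | insert a s' hm ih =>
    simp only [Finset.sum_insert hm]
    exact (h a (Finset.mem_insert_self a s')).add
      (ih fun m hm' => h m (Finset.mem_insert_of_mem hm'))

lemma tOp_memℓp_coeff (e : HilbertBasis ℕ ℂ ℋ) (E : ℕ → ℝ) (N : ℕ)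
    (hne : ∀ n, N ≤ n → E n ≠ 0)
    (hsum : Summable fun n : ℕ => 1 / (E (n + N)) ^ 2) (a : ℕ →₀ ℂ) :
    Memℓp (timeOpCoeff e E (a.sum fun i r => r • (e i : ℋ))) 2 := by
  have heq : timeOpCoeff e E (a.sum fun i r => r • (e i : ℋ))
      = fun n => ∑ m ∈ a.support, if m = n then 0 else (a m) / ((E n : ℂ) - (E m : ℂ)) :=
    funext fun n => tOp_coeff_eq e E a n
  rw [heq]
  exact tOp_memℓp_sum fun m _ => tOp_memℓp_g E N hne hsum m (a m)

lemma tOp_summable_smul (e : HilbertBasis ℕ ℂ ℋ) [CompleteSpace ℋ] {c : ℕ → ℂ}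
    (hc : Memℓp c 2) : Summable fun n : ℕ => c n • (e n : ℋ) := by
  have := e.hasSum_repr_symm (⟨c, hc⟩ : lp (fun _ : ℕ => ℂ) 2)
  exact this.summable

lemma tOp_inner_tsum_eq (e : HilbertBasis ℕ ℂ ℋ) [CompleteSpace ℋ] (b : ℕ →₀ ℂ)
    (c : ℕ → ℂ) (hc : Summable fun n : ℕ => c n • (e n : ℋ)) :
    ⟪(b.sum fun i r => r • (e i : ℋ)), ∑' n : ℕ, c n • (e n : ℋ)⟫_ℂ
      = ∑ n ∈ b.support, c n * (starRingEnd ℂ) (b n) := by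
  set ψ := b.sum fun i r => r • (e i : ℋ) with hψ
  have h1 : HasSum (fun n => ⟪ψ, c n • (e n : ℋ)⟫_ℂ) ⟪ψ, ∑' n : ℕ, c n • (e n : ℋ)⟫_ℂ := by
    exact (innerSL ℂ ψ).hasSum hc.hasSum
  have hterm : ∀ n, ⟪ψ, c n • (e n : ℋ)⟫_ℂ = c n * (starRingEnd ℂ) (b n) := by
    intro n
    rw [inner_smul_right, ← inner_conj_symm, tOp_inner_eq_finsupp]
  have h2 : HasSum (fun n => ⟪ψ, c n • (e n : ℋ)⟫_ℂ)
      (∑ n ∈ b.support, c n * (starRingEnd ℂ) (b n)) := by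
    rw [funext hterm]
    apply hasSum_sum_of_ne_finset_zero
    intro n hn
    rw [Finsupp.notMem_support_iff.mp hn]
    simp
  exact h1.unique h2

lemma tOp_double_sum (E : ℕ → ℝ) (a b : ℕ →₀ ℂ) :
    ∑ n ∈ a.support,
        (∑ m ∈ b.support, if m = n then 0 else b m / ((E n : ℂ) - (E m : ℂ)))
          * (starRingEnd ℂ) (a n)
      = - ∑ n ∈ b.support,
          (starRingEnd ℂ) (∑ m ∈ a.support, if m = n then 0 else a m / ((E n : ℂ) - (E m : ℂ)))
            * b n := by
  simp only [map_sum, Finset.sum_mul, ← Finset.sum_neg_distrib]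
  rw [Finset.sum_comm]
  refine Finset.sum_congr rfl fun n hn => Finset.sum_congr rfl fun m hm => ?_
  rcases eq_or_ne m n with rfl | hmn
  · simp
  · rw [if_neg hmn, if_neg (Ne.symm hmn), map_div₀]
    have hc2 : (starRingEnd ℂ) ((E n : ℂ) - (E m : ℂ)) = ((E n : ℂ) - (E m : ℂ)) := by
      simp [map_sub, Complex.conj_ofReal]
    rw [hc2]
    have hd : ((E m : ℂ) - (E n : ℂ)) = -(((E n : ℂ) - (E m : ℂ))) := by ring
    rw [hd, div_neg]
    ring

end AuxLemmas

/-- well-definedness and symmetry on `𝓕 = span{e_n}` of the time operator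
`Tφ = i ∑_n (∑_{m≠n} ⟨e_m,φ⟩/(E_n - E_m)) e_n`, under the growth condition
`∑_{n ≥ N} 1/E_n² < ∞`. -/
theorem timeOp_well_defined_and_symmetric
    {ℋ : Type*} [NormedAddCommGroup ℋ] [InnerProductSpace ℂ ℋ] [CompleteSpace ℋ]
    (e : HilbertBasis ℕ ℂ ℋ) (E : ℕ → ℝ)
    (hdist : Function.Injective E)
    (N : ℕ) (hne : ∀ n, N ≤ n → E n ≠ 0)
    (hsum : Summable fun n : ℕ => 1 / (E (n + N)) ^ 2) :
    (∀ φ ∈ Submodule.span ℂ (Set.range e),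
      Summable fun n : ℕ => ‖timeOpCoeff e E φ n‖ ^ 2) ∧
    (∀ φ ∈ Submodule.span ℂ (Set.range e),
      Summable fun n : ℕ => timeOpCoeff e E φ n • (e n : ℋ)) ∧
    (∀ φ ∈ Submodule.span ℂ (Set.range e), ∀ ψ ∈ Submodule.span ℂ (Set.range e),
      ⟪timeOp e E φ, ψ⟫_ℂ = ⟪φ, timeOp e E ψ⟫_ℂ) := by
  have hmem : ∀ φ ∈ Submodule.span ℂ (Set.range e), Memℓp (timeOpCoeff e E φ) 2 := by
    intro φ hφ
    obtain ⟨a, rfl⟩ := Finsupp.mem_span_range_iff_exists_finsupp.mp hφ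
    exact tOp_memℓp_coeff e E N hne hsum a
  refine ⟨?_, ?_, ?_⟩
  · intro φ hφ
    have h := (hmem φ hφ).summable (by norm_num)
    have h2 : ((2:ENNReal)).toReal = (2:ℝ) := by simp
    rw [h2] at h
    apply h.congr
    intro n
    rw [Real.rpow_two, pow_two]
  · intro φ hφ
    exact tOp_summable_smul e (hmem φ hφ)
  · intro φ hφ ψ hψ
    have hsφ := tOp_summable_smul e (hmem φ hφ)
    have hsψ := tOp_summable_smul e (hmem ψ hψ)
    obtain ⟨a, rfl⟩ := Finsupp.mem_span_range_iff_exists_finsupp.mp hφ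
    obtain ⟨b, rfl⟩ := Finsupp.mem_span_range_iff_exists_finsupp.mp hψ
    unfold timeOp
    rw [inner_smul_left, inner_smul_right, Complex.conj_I]
    rw [← inner_conj_symm, tOp_inner_tsum_eq e b _ hsφ]
    rw [tOp_inner_tsum_eq e a _ hsψ]
    simp only [map_sum, map_mul, RingHomCompTriple.comp_apply, RingHom.id_apply]
    have hL : ∀ n, (starRingEnd ℂ) (timeOpCoeff e E (a.sum fun i r => r • (e i : ℋ)) n)
        = (starRingEnd ℂ) (∑ m ∈ a.support, if m = n then 0
            else a m / ((E n : ℂ) - (E m : ℂ))) := fun n => by rw [tOp_coeff_eq]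
    have hR : ∀ n, timeOpCoeff e E (b.sum fun i r => r • (e i : ℋ)) n
        = ∑ m ∈ b.support, if m = n then 0 else b m / ((E n : ℂ) - (E m : ℂ)) :=
      fun n => tOp_coeff_eq e E b n
    simp only [hL, hR]
    rw [tOp_double_sum E a b]
    ring
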